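/- arXiv:0805.3869 — 2 statements merged into one kernel-verified Lean document; each statement's English description precedes it below -/
import Mathlib

section
/- There exist constants C_s > 0, depending only on s and D, and, for each δ with 0 < δ < (β' − α')/2, a constant C_δ > 0, depending only on s, D, δ, V, α', β' (and in particular not on ε, J or v), such that the following holds. Let J ⊂ ℝ be a bounded interval of positive length, ε > 0, and v : J → ℝ measurable. Set A := {x ∈ J : v(x) ≤ α' + δ}, B := {x ∈ J : v(x) ≥ β' − δ}, r_A := |A|/|J|, r_B := |B|/|J|, and assume r_A < 1 and r_B < 1. Then G_ε[v, J] ≥ ε^{1−a} · C_s · (β' − α' − 2δ)² / |J|^{2s−1} · { 1 − (1 − r_A)^{−(2s−1)} − (1 − r_B)^{−(2s−1)} } + C_δ. -/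
open Real MeasureTheory Set
open scoped ENNReal

/-- The Gagliardo-type double integral ∬_{E×E} |v(x') − v(x)|²/|x' − x|^{1+2s} dx' dx. -/
noncomputable def gag (s : ℝ) (E : Set ℝ) (v : ℝ → ℝ) : ℝ≥0∞ :=
  ∫⁻ x in E, ∫⁻ x' in E, ENNReal.ofReal ((v x' - v x) ^ 2 / |x' - x| ^ (1 + 2 * s))

/-- The functional
G_ε[v, E] := (ε^{1−a}/D) ∬_{E×E} |v(x')−v(x)|²/|x'−x|^{1+2s} + ε^{−(1−a)/(−a)} ∫_E V(v). -/
noncomputable def Gfun (a s D : ℝ) (V : ℝ → ℝ) (ε : ℝ) (E : Set ℝ) (v : ℝ → ℝ) : ℝ≥0∞ :=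
  ENNReal.ofReal (ε ^ (1 - a) / D) * gag s E v +
    ENNReal.ofReal (ε ^ (-((1 - a) / (-a)))) * ∫⁻ x in E, ENNReal.ofReal (V (v x))

lemma toReal_le_aux {x y : ℝ≥0∞} {d : ℝ} (h : x ≤ y + ENNReal.ofReal d) (hy : y ≠ ⊤)
    (hd : 0 ≤ d) : x.toReal ≤ y.toReal + d := by
  have hfin : y + ENNReal.ofReal d ≠ ⊤ := by
    simp [hy, ENNReal.add_ne_top]
  have := ENNReal.toReal_mono hfin h
  rwa [ENNReal.toReal_add hy ENNReal.ofReal_ne_top, ENNReal.toReal_ofReal hd] at this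

lemma window_fin (A : Set ℝ) (u w : ℝ) : volume (A ∩ Ioo u w) ≠ ⊤ :=
  ((measure_mono inter_subset_right).trans_lt measure_Ioo_lt_top).ne

lemma window_cont (A : Set ℝ) (r : ℝ) :
    Continuous (fun t => (volume (A ∩ Ioo (t - r) (t + r))).toReal) := by
  have key : ∀ t t' : ℝ, t ≤ t' →
      (volume (A ∩ Ioo (t' - r) (t' + r))).toReal
          ≤ (volume (A ∩ Ioo (t - r) (t + r))).toReal + (t' - t) ∧
      (volume (A ∩ Ioo (t - r) (t + r))).toReal
          ≤ (volume (A ∩ Ioo (t' - r) (t' + r))).toReal + (t' - t) := by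
    intro t t' htt
    constructor
    · have hsub : A ∩ Ioo (t' - r) (t' + r)
          ⊆ (A ∩ Ioo (t - r) (t + r)) ∪ Ico (t + r) (t' + r) := by
        rintro z ⟨hzA, hz1, hz2⟩
        by_cases h : z < t + r
        · exact Or.inl ⟨hzA, by constructor <;> [linarith; exact h]⟩
        · exact Or.inr ⟨not_lt.1 h, hz2⟩
      have h1 : volume (A ∩ Ioo (t' - r) (t' + r))
          ≤ volume (A ∩ Ioo (t - r) (t + r)) + ENNReal.ofReal (t' - t) := by
        refine (measure_mono hsub).trans ((measure_union_le _ _).trans ?_)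
        gcongr
        rw [Real.volume_Ico]
        exact le_of_eq (by ring_nf)
      exact toReal_le_aux h1 (window_fin _ _ _) (by linarith)
    · have hsub : A ∩ Ioo (t - r) (t + r)
          ⊆ (A ∩ Ioo (t' - r) (t' + r)) ∪ Ioc (t - r) (t' - r) := by
        rintro z ⟨hzA, hz1, hz2⟩
        by_cases h : t' - r < z
        · exact Or.inl ⟨hzA, ⟨h, by linarith⟩⟩
        · exact Or.inr ⟨hz1, not_lt.1 h⟩
      have h1 : volume (A ∩ Ioo (t - r) (t + r))
          ≤ volume (A ∩ Ioo (t' - r) (t' + r)) + ENNReal.ofReal (t' - t) := by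
        refine (measure_mono hsub).trans ((measure_union_le _ _).trans ?_)
        gcongr
        rw [Real.volume_Ioc]
        exact le_of_eq (by ring_nf)
      exact toReal_le_aux h1 (window_fin _ _ _) (by linarith)
  have hlip : LipschitzWith 1 (fun t => (volume (A ∩ Ioo (t - r) (t + r))).toReal) := by
    apply LipschitzWith.of_dist_le_mul
    intro t t'
    rw [Real.dist_eq, Real.dist_eq, NNReal.coe_one, one_mul]
    rcases le_total t t' with h | h
    · have := key t t' h
      rw [abs_sub_le_iff, abs_of_nonpos (by linarith : t - t' ≤ 0)]
      constructor <;> linarith [this.1, this.2]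
    · have := key t' t h
      rw [abs_sub_le_iff, abs_of_nonneg (by linarith : 0 ≤ t - t')]
      constructor <;> linarith [this.1, this.2]
  exact hlip.continuous

lemma mass_lower (A B : Set ℝ) (x₀ y₀ xb t : ℝ) (hxb : 0 < xb)
    (hM : (volume (Ioo x₀ y₀ \ (A ∪ B))).toReal ≤ xb)
    (hL : 6 * xb ≤ y₀ - x₀) (ht : t ∈ Icc x₀ y₀) :
    2 * xb ≤ (volume (A ∩ Ioo (t - 3*xb) (t + 3*xb))).toReal
      + (volume (B ∩ Ioo (t - 3*xb) (t + 3*xb))).toReal := by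
  set W := Ioo (t - 3*xb) (t + 3*xb) with hW
  have hMfin : volume (Ioo x₀ y₀ \ (A ∪ B)) ≠ ⊤ :=
    ((measure_mono diff_subset).trans_lt measure_Ioo_lt_top).ne
  have hsub : Ioo x₀ y₀ ∩ W ⊆ (A ∩ W) ∪ (B ∩ W) ∪ (Ioo x₀ y₀ \ (A ∪ B)) := by
    rintro z ⟨hzJ, hzW⟩
    by_cases hA : z ∈ A
    · exact Or.inl (Or.inl ⟨hA, hzW⟩)
    by_cases hB : z ∈ B
    · exact Or.inl (Or.inr ⟨hB, hzW⟩)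
    · exact Or.inr ⟨hzJ, by simp [hA, hB]⟩
  have hJW : ENNReal.ofReal (3 * xb) ≤ volume (Ioo x₀ y₀ ∩ W) := by
    rw [hW, Ioo_inter_Ioo, Real.volume_Ioo]
    apply ENNReal.ofReal_le_ofReal
    obtain ⟨ht1, ht2⟩ := ht
    rcases le_total x₀ (t - 3*xb) with h | h <;> rcases le_total y₀ (t + 3*xb) with h' | h' <;>
      simp [max_eq_right, max_eq_left, min_eq_left, min_eq_right, h, h'] <;> linarith
  have hchain : ENNReal.ofReal (3 * xb) ≤
      ENNReal.ofReal ((volume (A ∩ W)).toReal + (volume (B ∩ W)).toReal + xb) := by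
    refine hJW.trans ((measure_mono hsub).trans ?_)
    refine (measure_union_le _ _).trans ?_
    refine (add_le_add (measure_union_le _ _) le_rfl).trans ?_
    rw [ENNReal.ofReal_add (by positivity) (by linarith [hM, ENNReal.toReal_nonneg.trans hM]),
      ENNReal.ofReal_add (by positivity) (by positivity)]
    gcongr
    · exact le_of_eq (ENNReal.ofReal_toReal (window_fin _ _ _)).symm
    · exact le_of_eq (ENNReal.ofReal_toReal (window_fin _ _ _)).symm
    · rw [← ENNReal.ofReal_toReal hMfin]; exact ENNReal.ofReal_le_ofReal hM
  rw [ENNReal.ofReal_le_ofReal_iff (by positivity)] at hchain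
  linarith

lemma trichotomy (A B : Set ℝ) (x₀ y₀ xb : ℝ) (hxb : 0 < xb) (hxy : x₀ < y₀)
    (hM : (volume (Ioo x₀ y₀ \ (A ∪ B))).toReal ≤ xb)
    (hL : 6 * xb ≤ y₀ - x₀) :
    (∃ t ∈ Icc x₀ y₀, xb/2 ≤ (volume (A ∩ Ioo (t - 3*xb) (t + 3*xb))).toReal ∧
        xb/2 ≤ (volume (B ∩ Ioo (t - 3*xb) (t + 3*xb))).toReal) ∨
    (∀ t ∈ Icc x₀ y₀, xb/2 ≤ (volume (A ∩ Ioo (t - 3*xb) (t + 3*xb))).toReal) ∨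
    (∀ t ∈ Icc x₀ y₀, xb/2 ≤ (volume (B ∩ Ioo (t - 3*xb) (t + 3*xb))).toReal) := by
  set fA := fun t => (volume (A ∩ Ioo (t - 3*xb) (t + 3*xb))).toReal with hfA
  set fB := fun t => (volume (B ∩ Ioo (t - 3*xb) (t + 3*xb))).toReal with hfB
  have hsum : ∀ t ∈ Icc x₀ y₀, 2 * xb ≤ fA t + fB t :=
    fun t ht => mass_lower A B x₀ y₀ xb t hxb hM hL ht
  by_cases hc1 : ∀ t ∈ Icc x₀ y₀, -xb ≤ fA t - fB t
  · refine Or.inr (Or.inl fun t ht => ?_)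
    have := hsum t ht; have := hc1 t ht; linarith
  by_cases hc2 : ∀ t ∈ Icc x₀ y₀, fA t - fB t ≤ xb
  · refine Or.inr (Or.inr fun t ht => ?_)
    have := hsum t ht; have := hc2 t ht; linarith
  push_neg at hc1 hc2
  obtain ⟨t₁, ht₁, ht₁'⟩ := hc1
  obtain ⟨t₀, ht₀, ht₀'⟩ := hc2
  have hcont : Continuous (fun t => fA t - fB t) :=
    (window_cont A (3*xb)).sub (window_cont B (3*xb))
  have hiv : (0:ℝ) ∈ uIcc (fA t₀ - fB t₀) (fA t₁ - fB t₁) := by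
    rw [mem_uIcc]
    right; constructor <;> linarith
  obtain ⟨t, htm, htv⟩ := intermediate_value_uIcc (hcont.continuousOn) hiv
  have htIcc : t ∈ Icc x₀ y₀ := by
    have : uIcc t₀ t₁ ⊆ Icc x₀ y₀ := uIcc_subset_Icc ht₀ ht₁
    exact this htm
  have hsum' := hsum t htIcc
  have htv2 : fA t - fB t = 0 := htv
  have heq : fA t = fB t := by linarith
  exact Or.inl ⟨t, htIcc, by constructor <;> linarith⟩

-- pointwise kernel bound
lemma pointwise_lb (s c : ℝ) (hs2 : 0 < 1 + 2*s) (hc : 0 < c) (xb : ℝ) (hxb : 0 < xb)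
    (p q d : ℝ) (hpq : q ≠ p) (hdist : |q - p| ≤ 6*xb) (hval : c^2 ≤ d^2) :
    ENNReal.ofReal (c^2 / (6*xb)^(1+2*s)) ≤ ENNReal.ofReal (d^2 / |q - p|^(1+2*s)) := by
  apply ENNReal.ofReal_le_ofReal
  have habs : 0 < |q - p| := abs_pos.2 (sub_ne_zero.2 hpq)
  have hd1 : 0 < |q - p| ^ (1+2*s) := rpow_pos_of_pos habs _
  have hd2 : |q - p| ^ (1+2*s) ≤ (6*xb) ^ (1+2*s) := rpow_le_rpow (abs_nonneg _) hdist hs2.le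
  rw [div_le_div_iff₀ (by positivity) hd1]
  exact mul_le_mul hval hd2 hd1.le (sq_nonneg _)

-- generic double-integral lower bound
lemma gag_restrict (s : ℝ) (x₀ y₀ : ℝ) (v : ℝ → ℝ) (S : Set ℝ) (T : ℝ → Set ℝ)
    (hS : S ⊆ Ioo x₀ y₀) (hT : ∀ x, T x ⊆ Ioo x₀ y₀) (hTm : ∀ x, MeasurableSet (T x))
    (κ : ℝ≥0∞)
    (hpt : ∀ x ∈ S, ∀ x' ∈ T x, κ ≤ ENNReal.ofReal ((v x' - v x) ^ 2 / |x' - x| ^ (1 + 2 * s)))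
    (η : ℝ≥0∞) (hη : ∀ x ∈ S, η ≤ κ * volume (T x)) (hSm : MeasurableSet S) :
    η * volume S ≤ gag s (Ioo x₀ y₀) v := by
  rw [gag]
  calc η * volume S = ∫⁻ _ in S, η := (setLIntegral_const S η).symm
    _ ≤ ∫⁻ x in S, ∫⁻ x' in Ioo x₀ y₀, ENNReal.ofReal ((v x' - v x) ^ 2 / |x' - x| ^ (1 + 2 * s)) := by
        apply setLIntegral_mono' hSm
        intro x hx
        refine (hη x hx).trans ?_
        calc κ * volume (T x) = ∫⁻ _ in T x, κ := (setLIntegral_const _ κ).symm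
          _ ≤ ∫⁻ x' in T x, ENNReal.ofReal ((v x' - v x) ^ 2 / |x' - x| ^ (1 + 2 * s)) :=
              setLIntegral_mono' (hTm x) (hpt x hx)
          _ ≤ ∫⁻ x' in Ioo x₀ y₀, ENNReal.ofReal ((v x' - v x) ^ 2 / |x' - x| ^ (1 + 2 * s)) :=
              lintegral_mono_set (hT x)
    _ ≤ ∫⁻ x in Ioo x₀ y₀, ∫⁻ x' in Ioo x₀ y₀, ENNReal.ofReal ((v x' - v x) ^ 2 / |x' - x| ^ (1 + 2 * s)) :=
        lintegral_mono_set hS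

lemma kinetic_lb (s : ℝ) (hs2 : 0 < 1 + 2*s) (x₀ y₀ : ℝ) (hxy : x₀ < y₀) (v : ℝ → ℝ)
    (c : ℝ) (hc : 0 < c)
    (A B : Set ℝ) (hAm : MeasurableSet A) (hBm : MeasurableSet B)
    (hAJ : A ⊆ Ioo x₀ y₀) (hBJ : B ⊆ Ioo x₀ y₀)
    (hv : ∀ x ∈ B, ∀ x' ∈ A, c ≤ v x - v x')
    (xb : ℝ) (hxb : 0 < xb)
    (hvolA : xb ≤ (volume A).toReal) (hvolB : xb ≤ (volume B).toReal)
    (hM : (volume (Ioo x₀ y₀ \ (A ∪ B))).toReal ≤ xb) :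
    ENNReal.ofReal (c^2 / (6*xb)^(1+2*s) * (xb^2/4)) ≤ gag s (Ioo x₀ y₀) v := by
  set κr := c^2 / (6*xb)^(1+2*s) with hκr
  have hκr0 : 0 ≤ κr := by positivity
  set κ := ENNReal.ofReal κr with hκ
  have hne : ∀ x ∈ B, ∀ x' ∈ A, x' ≠ x := by
    intro x hx x' hx' he
    have h1 := hv x hx x' hx'
    rw [he] at h1; linarith
  have hsqBA : ∀ x ∈ B, ∀ x' ∈ A, c^2 ≤ (v x' - v x)^2 := by
    intro x hx x' hx'
    have := hv x hx x' hx'; nlinarith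
  have hsqAB : ∀ x ∈ A, ∀ x' ∈ B, c^2 ≤ (v x' - v x)^2 := by
    intro x hx x' hx'
    have := hv x' hx' x hx; nlinarith
  -- combine: from η and vol S bounds
  have final : ∀ (S : Set ℝ) (T : ℝ → Set ℝ), S ⊆ Ioo x₀ y₀ → (∀ x, T x ⊆ Ioo x₀ y₀) →
      (∀ x, MeasurableSet (T x)) → MeasurableSet S →
      (∀ x ∈ S, ∀ x' ∈ T x, κ ≤ ENNReal.ofReal ((v x' - v x) ^ 2 / |x' - x| ^ (1 + 2 * s))) →
      (∀ x ∈ S, ENNReal.ofReal (xb/2) ≤ volume (T x)) →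
      (ENNReal.ofReal (xb/2) ≤ volume S) →
      ENNReal.ofReal (κr * (xb^2/4)) ≤ gag s (Ioo x₀ y₀) v := by
    intro S T hS hT hTm hSm hpt hη hvolS
    have h1 : κ * ENNReal.ofReal (xb/2) * volume S ≤ gag s (Ioo x₀ y₀) v := by
      apply gag_restrict s x₀ y₀ v S T hS hT hTm κ hpt _ (fun x hx => by
        rw [mul_comm κ _]
        exact mul_le_mul_left (hη x hx) κ |>.trans_eq (mul_comm _ κ)) hSm
    refine le_trans ?_ h1
    calc ENNReal.ofReal (κr * (xb^2/4)) = κ * ENNReal.ofReal (xb/2) * ENNReal.ofReal (xb/2) := by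
          rw [hκ, ← ENNReal.ofReal_mul hκr0, ← ENNReal.ofReal_mul (by positivity)]
          ring_nf
      _ ≤ κ * ENNReal.ofReal (xb/2) * volume S := mul_le_mul_right hvolS _
  by_cases hL : 6 * xb < y₀ - x₀
  · rcases trichotomy A B x₀ y₀ xb hxb hxy hM hL.le with ⟨t, ht, htA, htB⟩ | hall | hall
    · -- window case
      refine final (B ∩ Ioo (t - 3*xb) (t + 3*xb)) (fun _ => A ∩ Ioo (t - 3*xb) (t + 3*xb))
        (inter_subset_left.trans hBJ) (fun _ => inter_subset_left.trans hAJ)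
        (fun _ => hAm.inter measurableSet_Ioo) (hBm.inter measurableSet_Ioo) ?_ ?_ ?_
      · rintro x ⟨hxB, hxW⟩ x' ⟨hx'A, hx'W⟩
        apply pointwise_lb s c hs2 hc xb hxb x x' _ (hne x hxB x' hx'A)
        · rw [abs_sub_le_iff]
          obtain ⟨w1, w2⟩ := hxW; obtain ⟨w3, w4⟩ := hx'W
          constructor <;> linarith
        · exact hsqBA x hxB x' hx'A
      · intro x _
        exact ENNReal.ofReal_le_of_le_toReal htA
      · exact ENNReal.ofReal_le_of_le_toReal htB
    · -- A-mass everywhere, integrate over B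
      refine final B (fun x => A ∩ Ioo (x - 3*xb) (x + 3*xb)) hBJ
        (fun _ => inter_subset_left.trans hAJ) (fun _ => hAm.inter measurableSet_Ioo) hBm ?_ ?_ ?_
      · rintro x hxB x' ⟨hx'A, hx'W⟩
        apply pointwise_lb s c hs2 hc xb hxb x x' _ (hne x hxB x' hx'A)
        · rw [abs_sub_le_iff]
          obtain ⟨w3, w4⟩ := hx'W
          constructor <;> linarith
        · exact hsqBA x hxB x' hx'A
      · intro x hx
        have hxJ := hBJ hx
        exact ENNReal.ofReal_le_of_le_toReal (hall x ⟨hxJ.1.le, hxJ.2.le⟩)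
      · exact ENNReal.ofReal_le_of_le_toReal (by linarith)
    · -- B-mass everywhere, integrate over A
      refine final A (fun x => B ∩ Ioo (x - 3*xb) (x + 3*xb)) hAJ
        (fun _ => inter_subset_left.trans hBJ) (fun _ => hBm.inter measurableSet_Ioo) hAm ?_ ?_ ?_
      · rintro x hxA x' ⟨hx'B, hx'W⟩
        have hne' : x' ≠ x := fun he => by
          have h1 := hv x' hx'B x hxA; rw [he] at h1; linarith
        apply pointwise_lb s c hs2 hc xb hxb x x' _ hne'
        · rw [abs_sub_le_iff]
          obtain ⟨w3, w4⟩ := hx'W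
          constructor <;> linarith
        · exact hsqAB x hxA x' hx'B
      · intro x hx
        have hxJ := hAJ hx
        exact ENNReal.ofReal_le_of_le_toReal (hall x ⟨hxJ.1.le, hxJ.2.le⟩)
      · exact ENNReal.ofReal_le_of_le_toReal (by linarith)
  · -- small interval: all pairs are close
    push_neg at hL
    refine final B (fun _ => A) hBJ (fun _ => hAJ) (fun _ => hAm) hBm ?_ ?_ ?_
    · intro x hxB x' hx'A
      apply pointwise_lb s c hs2 hc xb hxb x x' _ (hne x hxB x' hx'A)
      · have h1 := hBJ hxB; have h2 := hAJ hx'A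
        rw [abs_sub_le_iff]
        obtain ⟨w1, w2⟩ := h1; obtain ⟨w3, w4⟩ := h2
        constructor <;> linarith
      · exact hsqBA x hxB x' hx'A
    · intro x _
      exact ENNReal.ofReal_le_of_le_toReal (by linarith)
    · exact ENNReal.ofReal_le_of_le_toReal (by linarith)

lemma helper2 (σ p q X : ℝ) (hσ : 0 < σ) (hp : 0 < p) (hq : 0 < q) (hX : 0 < X) :
    p ^ (σ/(1+σ)) * q ^ (1/(1+σ)) ≤ p * X + q * X ^ (-σ) := by
  have h1σ : (0:ℝ) < 1 + σ := by linarith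
  set e := 1/(1+σ) with he
  set m := σ/(1+σ) with hm
  have he0 : 0 < e := by positivity
  have hem : (1:ℝ) - e = m := by rw [he, hm]; field_simp; ring
  have hme : (1:ℝ) - m = e := by rw [he, hm]; field_simp; ring
  set Xs := (q/p) ^ e with hXs
  have hXs0 : 0 < Xs := rpow_pos_of_pos (by positivity) _
  have hpe : (0:ℝ) < p ^ e := rpow_pos_of_pos hp _
  have hqm : (0:ℝ) < q ^ m := rpow_pos_of_pos hq _
  have key1 : p * Xs = p ^ m * q ^ e := by
    rw [hXs, div_rpow hq.le hp.le, ← hem, rpow_sub hp, rpow_one]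
    field_simp
  have key2 : q * Xs ^ (-σ) = p ^ m * q ^ e := by
    have h1 : Xs ^ (-σ) = (q/p) ^ (e * -σ) := by
      rw [hXs, ← rpow_mul (by positivity)]
    have h2 : e * -σ = -m := by rw [he, hm]; ring
    rw [h1, h2, rpow_neg (by positivity), div_rpow hq.le hp.le, inv_div]
    rw [← hme, rpow_sub hq, rpow_one]
    field_simp
  rcases le_total Xs X with h | h
  · calc p ^ m * q ^ e = p * Xs := key1.symm
      _ ≤ p * X := by nlinarith
      _ ≤ p * X + q * X ^ (-σ) := le_add_of_nonneg_right (by positivity)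
  · calc p ^ m * q ^ e = q * Xs ^ (-σ) := key2.symm
      _ ≤ q * X ^ (-σ) := by
          have := rpow_le_rpow_of_nonpos hX h (neg_nonpos.2 hσ.le)
          nlinarith [rpow_pos_of_pos hX (-σ)]
      _ ≤ p * X + q * X ^ (-σ) := le_add_of_nonneg_left (by positivity)

lemma cancel_const (a cV q0 ε : ℝ) (ha1 : -1 < a) (ha2 : a < 0) (hcV : 0 < cV)
    (hq0 : 0 < q0) (hε : 0 < ε) :
    (cV * ε ^ (-((1-a)/(-a)))) ^ ((-a)/(1-a)) * (q0 * ε ^ (1-a)) ^ (1/(1-a))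
      = cV ^ ((-a)/(1-a)) * q0 ^ (1/(1-a)) := by
  have ha0 : a ≠ 0 := ne_of_lt ha2
  have h1a : (1:ℝ) - a ≠ 0 := by intro h; nlinarith
  rw [mul_rpow hcV.le (rpow_nonneg hε.le _), mul_rpow hq0.le (rpow_nonneg hε.le _),
    ← rpow_mul hε.le, ← rpow_mul hε.le]
  have h0 : (-((1-a)/(-a))) * ((-a)/(1-a)) + (1-a) * (1/(1-a)) = 0 := by
    field_simp
    ring
  have hone : ε ^ (-((1-a)/(-a)) * ((-a)/(1-a))) * ε ^ ((1-a) * (1/(1-a))) = 1 := by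
    rw [← rpow_add hε, h0, rpow_zero]
  calc cV ^ ((-a)/(1-a)) * ε ^ (-((1-a)/(-a)) * ((-a)/(1-a)))
        * (q0 ^ (1/(1-a)) * ε ^ ((1-a) * (1/(1-a))))
      = cV ^ ((-a)/(1-a)) * q0 ^ (1/(1-a))
        * (ε ^ (-((1-a)/(-a)) * ((-a)/(1-a))) * ε ^ ((1-a) * (1/(1-a)))) := by ring
    _ = cV ^ ((-a)/(1-a)) * q0 ^ (1/(1-a)) := by rw [hone, mul_one]

lemma kin_const (s D c E xb : ℝ) (hD : 0 < D) (hxb : 0 < xb) :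
    E / D * (c^2 / (6*xb)^(1+2*s) * (xb^2/4)) = c^2/(4*D*6^(1+2*s)) * E * xb ^ (-(2*s-1)) := by
  have h6 : (6*xb)^(1+2*s) = 6^(1+2*s) * xb^(1+2*s) := mul_rpow (by norm_num) hxb.le
  have h6p : (0:ℝ) < (6:ℝ)^(1+2*s) := rpow_pos_of_pos (by norm_num) _
  have hxp : (0:ℝ) < xb^(1+2*s) := rpow_pos_of_pos hxb _
  have hx2 : xb^(2:ℕ) = xb^((2:ℕ):ℝ) := (rpow_natCast xb 2).symm
  have hsub : xb ^ (-(2*s-1)) = xb ^ ((2:ℕ):ℝ) / xb^(1+2*s) := by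
    rw [← rpow_sub hxb]; congr 1; push_cast; ring
  rw [h6, hsub, ← hx2]
  field_simp

lemma thresh_const (C1 E Cd σ : ℝ) (hC1 : 0 < C1) (hE : 0 < E) (hCd : 0 < Cd) (hσ : 0 < σ) :
    C1 * E * ((C1*E/Cd) ^ (1/σ)) ^ (-σ) = Cd := by
  rw [← rpow_mul (by positivity), show 1/σ * -σ = -1 by field_simp, rpow_neg_one]
  field_simp

set_option maxHeartbeats 2000000 in
theorem stmt_8 (a s D α' β' : ℝ) (V : ℝ → ℝ)
    (ha : a ∈ Set.Ioo (-1 : ℝ) 0) (hs : s = (1 - a) / 2) (hD : 0 < D) (hαβ : α' < β')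
    (hV0 : ∀ t, 0 ≤ V t) (hVc : Continuous V)
    (hVz : ∀ t, V t = 0 ↔ t = α' ∨ t = β') :
    ∃ Cs : ℝ, 0 < Cs ∧
      ∀ δ : ℝ, 0 < δ → δ < (β' - α') / 2 →
        ∃ Cδ : ℝ, 0 < Cδ ∧
          ∀ (x₀ y₀ ε : ℝ) (v : ℝ → ℝ), x₀ < y₀ → 0 < ε → Measurable v →
            ∀ rA rB : ℝ,
              rA = (volume {x ∈ Ioo x₀ y₀ | v x ≤ α' + δ}).toReal / (y₀ - x₀) →
              rB = (volume {x ∈ Ioo x₀ y₀ | β' - δ ≤ v x}).toReal / (y₀ - x₀) →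
              rA < 1 → rB < 1 →
              ENNReal.ofReal
                  (ε ^ (1 - a) * Cs * (β' - α' - 2 * δ) ^ 2 / (y₀ - x₀) ^ (2 * s - 1) *
                      (1 - (1 - rA) ^ (-(2 * s - 1)) - (1 - rB) ^ (-(2 * s - 1))) + Cδ) ≤
                Gfun a s D V ε (Ioo x₀ y₀) v := by
  obtain ⟨ha1, ha2⟩ := ha
  have hσa : 2 * s - 1 = -a := by rw [hs]; ring
  have hσ : 0 < 2 * s - 1 := by rw [hσa]; linarith
  have h2s : (0:ℝ) < 1 + 2 * s := by linarith
  have h1a : (0:ℝ) < 1 - a := by linarith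
  have hexp1 : (2*s-1)/(1+(2*s-1)) = (-a)/(1-a) := by rw [hσa]; ring_nf
  have hexp2 : 1/(1+(2*s-1)) = 1/(1-a) := by rw [hσa]; ring_nf
  refine ⟨1, one_pos, ?_⟩
  intro δ hδ hδ2
  set c := β' - α' - 2 * δ with hcdef
  have hc : 0 < c := by rw [hcdef]; linarith
  have hIcc : α' + δ ≤ β' - δ := by linarith
  obtain ⟨t₀, ht₀, hmin'⟩ :=
    isCompact_Icc.exists_isMinOn (nonempty_Icc.2 hIcc) hVc.continuousOn
  have hmin : ∀ y ∈ Icc (α'+δ) (β'-δ), V t₀ ≤ V y := fun y hy => hmin' hy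
  set cV := V t₀ with hcVdef
  have hcV : 0 < cV := by
    rcases lt_or_eq_of_le (hV0 t₀) with h | h
    · exact h
    · exfalso
      rcases (hVz t₀).1 h.symm with rfl | rfl
      · exact absurd ht₀.1 (by linarith)
      · exact absurd ht₀.2 (by linarith)
  set C₁ := c^2/(4*D*6^(1+2*s)) with hC₁def
  have hC₁ : 0 < C₁ := by rw [hC₁def]; positivity
  set ConstA := cV ^ ((-a)/(1-a)) * (c^2 * 2^(-(2*s-1))) ^ (1/(1-a)) with hCAdef
  set ConstB := cV ^ ((-a)/(1-a)) * C₁ ^ (1/(1-a)) with hCBdef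
  have hCA : 0 < ConstA := by rw [hCAdef]; positivity
  have hCB : 0 < ConstB := by rw [hCBdef]; positivity
  refine ⟨min ConstA ConstB, lt_min hCA hCB, ?_⟩
  set Cδ := min ConstA ConstB with hCδdef
  have hCδ : 0 < Cδ := lt_min hCA hCB
  have hCδA : Cδ ≤ ConstA := min_le_left _ _
  have hCδB : Cδ ≤ ConstB := min_le_right _ _
  intro x₀ y₀ ε v hxy hε hv rA rB hrA hrB hrA1 hrB1
  -- continuing after intro x₀ y₀ ε v hxy hε hv rA rB hrA hrB hrA1 hrB1
  set L := y₀ - x₀ with hLdef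
  have hL0 : 0 < L := by rw [hLdef]; linarith
  set J := Ioo x₀ y₀ with hJdef
  set A := {x ∈ J | v x ≤ α' + δ} with hAdef
  set B := {x ∈ J | β' - δ ≤ v x} with hBdef
  set M := J \ (A ∪ B) with hMdef
  have hAm : MeasurableSet A := by
    have : A = Ioo x₀ y₀ ∩ v ⁻¹' (Iic (α' + δ)) := by
      ext z; simp [hAdef, hJdef, mem_sep_iff, And.comm]
    rw [this]; exact measurableSet_Ioo.inter (hv measurableSet_Iic)
  have hBm : MeasurableSet B := by
    have : B = Ioo x₀ y₀ ∩ v ⁻¹' (Ici (β' - δ)) := by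
      ext z; simp [hBdef, hJdef, mem_sep_iff, And.comm]
    rw [this]; exact measurableSet_Ioo.inter (hv measurableSet_Ici)
  have hMm : MeasurableSet M := measurableSet_Ioo.diff (hAm.union hBm)
  have hAJ : A ⊆ J := sep_subset _ _
  have hBJ : B ⊆ J := sep_subset _ _
  have hABdisj : Disjoint A B := by
    rw [disjoint_left]
    rintro z ⟨hz1, hz2⟩ ⟨hz3, hz4⟩
    linarith
  have hJvol : volume J = ENNReal.ofReal L := by rw [hJdef, Real.volume_Ioo]
  have hJfin : volume J ≠ ⊤ := by rw [hJvol]; exact ENNReal.ofReal_ne_top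
  have hAfin : volume A ≠ ⊤ := (lt_of_le_of_lt (measure_mono hAJ) (lt_top_iff_ne_top.2 hJfin)).ne
  have hBfin : volume B ≠ ⊤ := (lt_of_le_of_lt (measure_mono hBJ) (lt_top_iff_ne_top.2 hJfin)).ne
  have hMfin : volume M ≠ ⊤ :=
    (lt_of_le_of_lt (measure_mono diff_subset) (lt_top_iff_ne_top.2 hJfin)).ne
  set A' := (volume A).toReal with hA'def
  set B' := (volume B).toReal with hB'def
  set X := (volume M).toReal with hXdef
  have hA'0 : 0 ≤ A' := ENNReal.toReal_nonneg
  have hB'0 : 0 ≤ B' := ENNReal.toReal_nonneg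
  have hX0' : 0 ≤ X := ENNReal.toReal_nonneg
  have hsum : A' + B' + X = L := by
    have hU : A ∪ B ∪ M = J := union_diff_cancel (union_subset hAJ hBJ)
    have h1 : volume (A ∪ B ∪ M) = volume (A ∪ B) + volume M :=
      measure_union disjoint_sdiff_right hMm
    have h2 : volume (A ∪ B) = volume A + volume B := measure_union hABdisj hBm
    have h3 : (volume J).toReal = L := by rw [hJvol, ENNReal.toReal_ofReal hL0.le]
    rw [← h3, ← hU, h1, h2, ENNReal.toReal_add (ENNReal.add_ne_top.2 ⟨hAfin, hBfin⟩) hMfin,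
      ENNReal.toReal_add hAfin hBfin]
  have hA'eq : A' = rA * L := by
    rw [hrA]; field_simp
  have hB'eq : B' = rB * L := by
    rw [hrB]; field_simp
  have h1rA0 : 0 < 1 - rA := by linarith
  have h1rB0 : 0 < 1 - rB := by linarith
  have hBX : B' + X = (1 - rA) * L := by linear_combination hsum - hA'eq
  have hAX : A' + X = (1 - rB) * L := by linear_combination hsum - hB'eq
  have hBXpos : 0 < B' + X := by rw [hBX]; positivity
  have hAXpos : 0 < A' + X := by rw [hAX]; positivity
  have hBXleL : B' + X ≤ L := by linarith
  have hAXleL : A' + X ≤ L := by linarith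
  have hE : (0:ℝ) < ε ^ (1 - a) := rpow_pos_of_pos hε _
  have hlam : (0:ℝ) < ε ^ (-((1 - a) / (-a))) := rpow_pos_of_pos hε _
  have hEc2 : (0:ℝ) < ε ^ (1 - a) * c ^ 2 := by positivity
  have hTeq : ε ^ (1 - a) * 1 * c ^ 2 / L ^ (2 * s - 1) *
      (1 - (1 - rA) ^ (-(2 * s - 1)) - (1 - rB) ^ (-(2 * s - 1)))
      = ε ^ (1 - a) * c ^ 2 *
        (L ^ (-(2 * s - 1)) - (B' + X) ^ (-(2 * s - 1)) - (A' + X) ^ (-(2 * s - 1))) := by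
    rw [hBX, hAX, mul_rpow h1rA0.le hL0.le, mul_rpow h1rB0.le hL0.le, rpow_neg hL0.le]
    have hLpow : L ^ (2 * s - 1) ≠ 0 := ne_of_gt (rpow_pos_of_pos hL0 _)
    field_simp
  have hdrop1 : L ^ (-(2 * s - 1)) ≤ (B' + X) ^ (-(2 * s - 1)) :=
    rpow_le_rpow_of_nonpos hBXpos hBXleL (by linarith)
  have hdrop1' : L ^ (-(2 * s - 1)) ≤ (A' + X) ^ (-(2 * s - 1)) :=
    rpow_le_rpow_of_nonpos hAXpos hAXleL (by linarith)
  -- potential lower bound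
  have hpot : ENNReal.ofReal (ε ^ (-((1 - a) / (-a))) * (cV * X))
      ≤ ENNReal.ofReal (ε ^ (-((1 - a) / (-a)))) * ∫⁻ x in J, ENNReal.ofReal (V (v x)) := by
    rw [ENNReal.ofReal_mul hlam.le]
    apply mul_le_mul_right
    have hptw : ∀ z ∈ M, ENNReal.ofReal cV ≤ ENNReal.ofReal (V (v z)) := by
      intro z hz
      obtain ⟨hzJ, hzn⟩ := hz
      rw [mem_union] at hzn; push_neg at hzn
      obtain ⟨hznA, hznB⟩ := hzn
      have h1 : ¬ (v z ≤ α' + δ) := fun h => hznA ⟨hzJ, h⟩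
      have h2 : ¬ (β' - δ ≤ v z) := fun h => hznB ⟨hzJ, h⟩
      push_neg at h1 h2
      exact ENNReal.ofReal_le_ofReal (hmin (v z) ⟨by linarith, by linarith⟩)
    calc ENNReal.ofReal (cV * X) = ENNReal.ofReal cV * volume M := by
          rw [ENNReal.ofReal_mul hcV.le, hXdef, ENNReal.ofReal_toReal hMfin]
      _ = ∫⁻ _ in M, ENNReal.ofReal cV := (setLIntegral_const _ _).symm
      _ ≤ ∫⁻ z in M, ENNReal.ofReal (V (v z)) := setLIntegral_mono' hMm hptw
      _ ≤ ∫⁻ z in J, ENNReal.ofReal (V (v z)) := lintegral_mono_set diff_subset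
  by_cases hcase : A' ≤ X ∨ B' ≤ X
  · -- Case A : no kinetic needed
    have hre : ε ^ (1 - a) * 1 * c ^ 2 / L ^ (2 * s - 1) *
        (1 - (1 - rA) ^ (-(2 * s - 1)) - (1 - rB) ^ (-(2 * s - 1))) + Cδ
        ≤ ε ^ (-((1 - a) / (-a))) * (cV * X) := by
      rw [hTeq]
      clear_value A' B' X L c cV ConstA ConstB Cδ
      rcases hcase with hAX' | hBX'
      · have hX0 : 0 < X := by linarith [hAXpos]
        have hdrop2 : (2 * X) ^ (-(2 * s - 1)) ≤ (A' + X) ^ (-(2 * s - 1)) :=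
          rpow_le_rpow_of_nonpos (by linarith) (by linarith) (by linarith)
        have h2X : (2 * X) ^ (-(2 * s - 1)) = 2 ^ (-(2 * s - 1)) * X ^ (-(2 * s - 1)) :=
          mul_rpow (by norm_num) hX0.le
        have key := helper2 (2 * s - 1) (cV * ε ^ (-((1 - a) / (-a))))
          (c ^ 2 * 2 ^ (-(2 * s - 1)) * ε ^ (1 - a)) X hσ (mul_pos hcV hlam)
          (mul_pos (mul_pos (pow_pos hc 2) (rpow_pos_of_pos two_pos _)) hE) hX0
        rw [hexp1, hexp2,
          cancel_const a cV (c ^ 2 * 2 ^ (-(2 * s - 1))) ε ha1 ha2 hcV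
            (mul_pos (pow_pos hc 2) (rpow_pos_of_pos two_pos _)) hε] at key
        rw [hCAdef] at hCδA
        have e1 : ε ^ (1 - a) * c ^ 2 * ((B' + X) ^ (-(2 * s - 1)) - L ^ (-(2 * s - 1))) ≥ 0 :=
          mul_nonneg hEc2.le (by linarith)
        have e2 : ε ^ (1 - a) * c ^ 2 * (2 ^ (-(2 * s - 1)) * X ^ (-(2 * s - 1)))
            ≤ ε ^ (1 - a) * c ^ 2 * (A' + X) ^ (-(2 * s - 1)) := by
          apply mul_le_mul_of_nonneg_left _ hEc2.le
          rw [← h2X]; exact hdrop2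
        linarith [key, e1, e2, hCδA]
      · have hX0 : 0 < X := by linarith [hBXpos]
        have hdrop2 : (2 * X) ^ (-(2 * s - 1)) ≤ (B' + X) ^ (-(2 * s - 1)) :=
          rpow_le_rpow_of_nonpos (by linarith) (by linarith) (by linarith)
        have h2X : (2 * X) ^ (-(2 * s - 1)) = 2 ^ (-(2 * s - 1)) * X ^ (-(2 * s - 1)) :=
          mul_rpow (by norm_num) hX0.le
        have key := helper2 (2 * s - 1) (cV * ε ^ (-((1 - a) / (-a))))
          (c ^ 2 * 2 ^ (-(2 * s - 1)) * ε ^ (1 - a)) X hσ (mul_pos hcV hlam)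
          (mul_pos (mul_pos (pow_pos hc 2) (rpow_pos_of_pos two_pos _)) hE) hX0
        rw [hexp1, hexp2,
          cancel_const a cV (c ^ 2 * 2 ^ (-(2 * s - 1))) ε ha1 ha2 hcV
            (mul_pos (pow_pos hc 2) (rpow_pos_of_pos two_pos _)) hε] at key
        rw [hCAdef] at hCδA
        have e1 : ε ^ (1 - a) * c ^ 2 * ((A' + X) ^ (-(2 * s - 1)) - L ^ (-(2 * s - 1))) ≥ 0 :=
          mul_nonneg hEc2.le (by linarith)
        have e2 : ε ^ (1 - a) * c ^ 2 * (2 ^ (-(2 * s - 1)) * X ^ (-(2 * s - 1)))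
            ≤ ε ^ (1 - a) * c ^ 2 * (B' + X) ^ (-(2 * s - 1)) := by
          apply mul_le_mul_of_nonneg_left _ hEc2.le
          rw [← h2X]; exact hdrop2
        linarith [key, e1, e2, hCδA]
    calc ENNReal.ofReal (ε ^ (1 - a) * 1 * c ^ 2 / L ^ (2 * s - 1) *
          (1 - (1 - rA) ^ (-(2 * s - 1)) - (1 - rB) ^ (-(2 * s - 1))) + Cδ)
        ≤ ENNReal.ofReal (ε ^ (-((1 - a) / (-a))) * (cV * X)) := ENNReal.ofReal_le_ofReal hre
      _ ≤ ENNReal.ofReal (ε ^ (-((1 - a) / (-a)))) * ∫⁻ x in J, ENNReal.ofReal (V (v x)) := hpot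
      _ ≤ Gfun a s D V ε J v := by simp only [Gfun]; exact le_add_self
  · -- Case B : kinetic bound needed
    push_neg at hcase
    obtain ⟨hXA, hXB⟩ := hcase
    set x0t := (C₁ * ε ^ (1 - a) / Cδ) ^ (1 / (2 * s - 1)) with hx0tdef
    have hx0t : 0 < x0t := by rw [hx0tdef]; positivity
    set xb := min A' (min B' (max X x0t)) with hxbdef
    have hxb0 : 0 < xb :=
      lt_min (by linarith) (lt_min (by linarith) (lt_of_lt_of_le hx0t (le_max_right _ _)))
    have hXxb : X ≤ xb :=
      le_min (le_of_lt hXA) (le_min (le_of_lt hXB) (le_max_left _ _))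
    have hxbA : xb ≤ A' := min_le_left _ _
    have hxbB : xb ≤ B' := (min_le_right _ _).trans (min_le_left _ _)
    have hxbM : xb ≤ max X x0t := (min_le_right _ _).trans (min_le_right _ _)
    have hv' : ∀ x ∈ B, ∀ x' ∈ A, c ≤ v x - v x' := by
      rintro x ⟨hx1, hx2⟩ x' ⟨hx'1, hx'2⟩
      rw [hcdef]; linarith
    have hkin := kinetic_lb s h2s x₀ y₀ hxy v c hc A B hAm hBm hAJ hBJ hv' xb hxb0
      hxbA hxbB hXxb
    have hkc := kin_const s D c (ε ^ (1 - a)) xb hD hxb0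
    rw [← hC₁def] at hkc
    have hkchain : ENNReal.ofReal (C₁ * ε ^ (1 - a) * xb ^ (-(2 * s - 1)))
        ≤ ENNReal.ofReal (ε ^ (1 - a) / D) * gag s J v := by
      calc ENNReal.ofReal (C₁ * ε ^ (1 - a) * xb ^ (-(2 * s - 1)))
          = ENNReal.ofReal (ε ^ (1 - a) / D * (c ^ 2 / (6 * xb) ^ (1 + 2 * s) * (xb ^ 2 / 4))) := by
            rw [hkc]
        _ = ENNReal.ofReal (ε ^ (1 - a) / D) *
            ENNReal.ofReal (c ^ 2 / (6 * xb) ^ (1 + 2 * s) * (xb ^ 2 / 4)) :=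
            ENNReal.ofReal_mul (by positivity)
        _ ≤ ENNReal.ofReal (ε ^ (1 - a) / D) * gag s J v := mul_le_mul_right hkin _
    have hT0 : ε ^ (1 - a) * c ^ 2 *
        (L ^ (-(2 * s - 1)) - (B' + X) ^ (-(2 * s - 1)) - (A' + X) ^ (-(2 * s - 1))) ≤ 0 := by
      have h3 : (0:ℝ) ≤ (A' + X) ^ (-(2 * s - 1)) := rpow_nonneg hAXpos.le _
      have h4 : L ^ (-(2 * s - 1)) - (B' + X) ^ (-(2 * s - 1)) - (A' + X) ^ (-(2 * s - 1)) ≤ 0 := by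
        linarith
      exact mul_nonpos_iff.mpr (Or.inl ⟨hEc2.le, h4⟩)
    have hre : ε ^ (1 - a) * 1 * c ^ 2 / L ^ (2 * s - 1) *
        (1 - (1 - rA) ^ (-(2 * s - 1)) - (1 - rB) ^ (-(2 * s - 1))) + Cδ
        ≤ C₁ * ε ^ (1 - a) * xb ^ (-(2 * s - 1)) + ε ^ (-((1 - a) / (-a))) * (cV * X) := by
      rw [hTeq]
      clear_value A' B' X L c cV C₁ ConstA ConstB Cδ x0t xb
      rcases le_or_gt x0t X with hc1 | hc1
      · have hX0 : 0 < X := lt_of_lt_of_le hx0t hc1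
        have hxble : xb ≤ X := by
          rw [max_eq_left hc1] at hxbM; exact hxbM
        have hmono : X ^ (-(2 * s - 1)) ≤ xb ^ (-(2 * s - 1)) :=
          rpow_le_rpow_of_nonpos hxb0 hxble (by linarith)
        have key := helper2 (2 * s - 1) (cV * ε ^ (-((1 - a) / (-a))))
          (C₁ * ε ^ (1 - a)) X hσ (mul_pos hcV hlam) (mul_pos hC₁ hE) hX0
        rw [hexp1, hexp2,
          cancel_const a cV C₁ ε ha1 ha2 hcV hC₁ hε] at key
        rw [hCBdef] at hCδB
        have e3 : C₁ * ε ^ (1 - a) * X ^ (-(2 * s - 1))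
            ≤ C₁ * ε ^ (1 - a) * xb ^ (-(2 * s - 1)) :=
          mul_le_mul_of_nonneg_left hmono (mul_nonneg hC₁.le hE.le)
        linarith [key, hCδB, e3, hT0]
      · have hxbx0 : xb ≤ x0t := by
          rw [max_eq_right hc1.le] at hxbM; exact hxbM
        have hmono : x0t ^ (-(2 * s - 1)) ≤ xb ^ (-(2 * s - 1)) :=
          rpow_le_rpow_of_nonpos hxb0 hxbx0 (by linarith)
        have hthresh := thresh_const C₁ (ε ^ (1 - a)) Cδ (2 * s - 1) hC₁ hE hCδ hσ
        rw [← hx0tdef] at hthresh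
        have e3 : C₁ * ε ^ (1 - a) * x0t ^ (-(2 * s - 1))
            ≤ C₁ * ε ^ (1 - a) * xb ^ (-(2 * s - 1)) :=
          mul_le_mul_of_nonneg_left hmono (mul_nonneg hC₁.le hE.le)
        have e4 : (0:ℝ) ≤ ε ^ (-((1 - a) / (-a))) * (cV * X) :=
          mul_nonneg hlam.le (mul_nonneg hcV.le hX0')
        linarith [hT0, e3, e4, hthresh.le, hthresh.ge]
    calc ENNReal.ofReal (ε ^ (1 - a) * 1 * c ^ 2 / L ^ (2 * s - 1) *
          (1 - (1 - rA) ^ (-(2 * s - 1)) - (1 - rB) ^ (-(2 * s - 1))) + Cδ)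
        ≤ ENNReal.ofReal (C₁ * ε ^ (1 - a) * xb ^ (-(2 * s - 1))
            + ε ^ (-((1 - a) / (-a))) * (cV * X)) := ENNReal.ofReal_le_ofReal hre
      _ ≤ ENNReal.ofReal (C₁ * ε ^ (1 - a) * xb ^ (-(2 * s - 1)))
            + ENNReal.ofReal (ε ^ (-((1 - a) / (-a))) * (cV * X)) := ENNReal.ofReal_add_le
      _ ≤ Gfun a s D V ε J v := by
          simp only [Gfun]; exact add_le_add hkchain hpot
end

section
/- Let 0 < δ < (β' − α')/2 and set m_δ := min{ V(t) : α' + δ ≤ t ≤ β' − δ } (which is strictly positive). Then every measurable function v : ℝ → ℝ with v(x) → α' as x → −∞ and v(x) → β' as x → +∞ satisfies G₁[v, ℝ] ≥ ((2s)^{(2s−1)/(2s)} / (2s − 1)) · ((β' − α' − 2δ)² / D)^{1/(2s)} · m_δ^{(2s−1)/(2s)} > 0. -/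
open Real MeasureTheory Set Filter
open scoped ENNReal

/-- The functional G₁[v, ℝ] := (1/D) ∬ |v(x)−v(x')|²/|x−x'|^{1+2s} + ∫ V(v); it is the
functional G_ε with ε = 1 and E = ℝ. -/
noncomputable def Gone (a s D : ℝ) (V : ℝ → ℝ) (v : ℝ → ℝ) : ℝ≥0∞ :=
  ENNReal.ofReal ((1 : ℝ) ^ (1 - a) / D) * gag s univ v +
    ENNReal.ofReal ((1 : ℝ) ^ (-((1 - a) / (-a)))) * ∫⁻ x, ENNReal.ofReal (V (v x))

lemma aux_int {p q : ℝ} (hp : p < -1) (hq : 0 < q) :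
    ∫⁻ w in Ioi q, ENNReal.ofReal (w ^ p) = ENNReal.ofReal (q ^ (p + 1) / (-(p + 1))) := by
  rw [← ofReal_integral_eq_lintegral_ofReal (integrableOn_Ioi_rpow_of_lt hp hq)
      ((ae_restrict_iff' measurableSet_Ioi).2 (ae_of_all _ fun w hw =>
        Real.rpow_nonneg (le_of_lt (hq.trans hw)) p))]
  rw [integral_Ioi_rpow_of_lt hp hq, div_neg, neg_div]

lemma aux_shift (c q : ℝ) (g : ℝ → ℝ≥0∞) :
    ∫⁻ x in Ioi (c + q), g (x - c) = ∫⁻ w in Ioi q, g w := by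
  have h := (measurePreserving_add_right volume c).setLIntegral_comp_preimage_emb
      (measurableEmbedding_addRight c) (fun x => g (x - c)) (Ioi (c + q))
  have hpre : (fun x => x + c) ⁻¹' (Ioi (c + q)) = Ioi q := by
    ext y; simp only [mem_preimage, mem_Ioi]; constructor <;> intro h <;> linarith
  rw [hpre] at h
  simp only [add_sub_cancel_right] at h
  exact h.symm

lemma aux_bathtub {B : Set ℝ} (hB : MeasurableSet B) {x q : ℝ} (hq : 0 < q)
    (hN : volume (Ioi x \ B) ≤ ENNReal.ofReal q)
    {g : ℝ → ℝ≥0∞} (hanti : ∀ y z : ℝ, x < y → y ≤ z → g z ≤ g y) :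
    ∫⁻ y in Ioi (x + q), g y ≤ ∫⁻ y in B ∩ Ioi x, g y := by
  have hxq : x < x + q := by linarith
  set N := Ioi x \ B with hNdef
  have hNm : MeasurableSet N := measurableSet_Ioi.diff hB
  have hsplit1 : Ioi (x + q) = (B ∩ Ioi (x + q)) ∪ (N ∩ Ioi (x + q)) := by
    ext y
    simp only [hNdef, mem_union, mem_inter_iff, mem_diff, mem_Ioi]
    constructor
    · intro hy
      by_cases h : y ∈ B
      · exact Or.inl ⟨h, hy⟩
      · exact Or.inr ⟨⟨by linarith, h⟩, hy⟩
    · rintro (⟨_, h⟩ | ⟨_, h⟩) <;> exact h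
  have hdisj1 : Disjoint (B ∩ Ioi (x + q)) (N ∩ Ioi (x + q)) :=
    disjoint_sdiff_self_right.mono inter_subset_left inter_subset_left
  have hval : volume (Ioc x (x + q)) = ENNReal.ofReal q := by
    rw [Real.volume_Ioc, add_sub_cancel_left]
  have hNIoc : N ∩ Ioc x (x + q) = Ioc x (x + q) \ B := by
    ext y
    simp only [hNdef, mem_inter_iff, mem_diff, mem_Ioi, mem_Ioc]
    constructor
    · rintro ⟨⟨h1, h2⟩, h3⟩; exact ⟨h3, h2⟩
    · rintro ⟨h3, h2⟩; exact ⟨⟨h3.1, h2⟩, h3⟩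
  have hμfin : volume (N ∩ Ioc x (x + q)) ≠ ⊤ := by
    refine ne_top_of_le_ne_top ?_ (measure_mono inter_subset_right)
    rw [hval]; exact ENNReal.ofReal_ne_top
  have hIocsplit : volume (B ∩ Ioc x (x + q)) + volume (N ∩ Ioc x (x + q))
      = ENNReal.ofReal q := by
    rw [hNIoc, ← hval, inter_comm B]
    exact measure_inter_add_diff _ hB
  have hkey : volume (N ∩ Ioi (x + q)) ≤ volume (B ∩ Ioc x (x + q)) := by
    have h1 : volume (N ∩ Ioi (x + q)) + volume (N ∩ Ioc x (x + q)) ≤ ENNReal.ofReal q := by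
      refine le_trans ?_ hN
      calc volume (N ∩ Ioi (x + q)) + volume (N ∩ Ioc x (x + q))
          ≤ volume (N \ Ioc x (x + q)) + volume (N ∩ Ioc x (x + q)) := by
            refine add_le_add_left (measure_mono ?_) _
            rintro y ⟨hy1, hy2⟩
            exact ⟨hy1, fun hy3 => absurd hy3.2 (not_le.2 hy2)⟩
        _ = volume N := by rw [add_comm]; exact measure_inter_add_diff N measurableSet_Ioc
    rw [← hIocsplit] at h1
    exact (ENNReal.add_le_add_iff_right hμfin).1 h1
  have hbound2 : ∫⁻ y in N ∩ Ioi (x + q), g y ≤ g (x + q) * volume (B ∩ Ioc x (x + q)) := by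
    calc ∫⁻ y in N ∩ Ioi (x + q), g y
        ≤ ∫⁻ _ in N ∩ Ioi (x + q), g (x + q) :=
          lintegral_mono_ae ((ae_restrict_iff' (hNm.inter measurableSet_Ioi)).2
            (ae_of_all _ fun y hy => hanti (x + q) y hxq (le_of_lt hy.2)))
      _ = g (x + q) * volume (N ∩ Ioi (x + q)) := setLIntegral_const _ _
      _ ≤ _ := mul_le_mul_right hkey _
  have hbound3 : g (x + q) * volume (B ∩ Ioc x (x + q)) ≤ ∫⁻ y in B ∩ Ioc x (x + q), g y := by
    calc g (x + q) * volume (B ∩ Ioc x (x + q))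
        = ∫⁻ _ in B ∩ Ioc x (x + q), g (x + q) := (setLIntegral_const _ _).symm
      _ ≤ ∫⁻ y in B ∩ Ioc x (x + q), g y :=
          lintegral_mono_ae ((ae_restrict_iff' (hB.inter measurableSet_Ioc)).2
            (ae_of_all _ fun y hy => hanti y (x + q) hy.2.1 hy.2.2))
  have hdisj2 : Disjoint (B ∩ Ioc x (x + q)) (B ∩ Ioi (x + q)) :=
    (Ioc_disjoint_Ioi le_rfl).mono inter_subset_right inter_subset_right
  have hsplit2 : B ∩ Ioi x = (B ∩ Ioc x (x + q)) ∪ (B ∩ Ioi (x + q)) := by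
    rw [← inter_union_distrib_left, Ioc_union_Ioi_eq_Ioi (le_of_lt hxq)]
  calc ∫⁻ y in Ioi (x + q), g y
      = (∫⁻ y in B ∩ Ioi (x + q), g y) + ∫⁻ y in N ∩ Ioi (x + q), g y := by
        conv_lhs => rw [hsplit1]
        exact lintegral_union (hNm.inter measurableSet_Ioi) hdisj1
    _ ≤ (∫⁻ y in B ∩ Ioi (x + q), g y) + ∫⁻ y in B ∩ Ioc x (x + q), g y :=
        add_le_add_right (hbound2.trans hbound3) _
    _ = ∫⁻ y in B ∩ Ioi x, g y := by
        rw [hsplit2, lintegral_union (hB.inter measurableSet_Ioi) hdisj2]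
        exact add_comm _ _

lemma aux_E1 {σ l t b : ℝ} (hσ : 0 < σ) (hl : 0 < l) (ht : 0 < t) (hb : 0 ≤ b) :
    t < (b + l) ^ (-σ) ↔ b < t ^ (-(1 / σ)) - l := by
  have hbl : 0 < b + l := by linarith
  have h1 : t ^ (-(1 / σ)) = (t⁻¹) ^ (1 / σ) := by
    rw [show -(1 / σ) = (-1) * (1 / σ) by ring, Real.rpow_mul ht.le, Real.rpow_neg_one]
  rw [lt_sub_iff_add_lt, h1, Real.rpow_neg hbl.le,
    lt_inv_comm₀ ht (Real.rpow_pos_of_pos hbl σ)]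
  have h2 : ((t⁻¹) ^ (1 / σ)) ^ σ = t⁻¹ := by
    rw [← Real.rpow_mul (inv_nonneg.2 ht.le), one_div, inv_mul_cancel₀ hσ.ne', Real.rpow_one]
  conv_lhs => rw [← h2]
  exact Real.rpow_lt_rpow_iff hbl.le (Real.rpow_nonneg (inv_nonneg.2 ht.le) _) hσ

lemma aux_layer {Aset : Set ℝ} (hA : MeasurableSet Aset) {φ : ℝ → ℝ} (hφm : Measurable φ)
    (hφ0 : ∀ x, 0 ≤ φ x)
    (hL : ∀ r : ℝ, 0 < r → ENNReal.ofReal r ≤ volume (Aset ∩ {x | φ x < r}))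
    {σ l : ℝ} (hσ : 0 < σ) (hl : 0 < l) :
    ∫⁻ u in Ioi (0 : ℝ), ENNReal.ofReal ((u + l) ^ (-σ)) ≤
      ∫⁻ x in Aset, ENNReal.ofReal ((φ x + l) ^ (-σ)) := by
  have hmu : Measurable fun u : ℝ => (u + l) ^ (-σ) :=
    (measurable_id.add_const l).pow_const (-σ)
  have hmφ : Measurable fun x : ℝ => (φ x + l) ^ (-σ) :=
    (hφm.add_const l).pow_const (-σ)
  rw [lintegral_eq_lintegral_meas_lt _ ((ae_restrict_iff' measurableSet_Ioi).2
      (ae_of_all _ fun u (hu : 0 < u) => Real.rpow_nonneg (by linarith) _)) hmu.aemeasurable]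
  rw [lintegral_eq_lintegral_meas_lt _
      (ae_of_all _ fun x => Real.rpow_nonneg (by linarith [hφ0 x]) _) hmφ.aemeasurable]
  refine lintegral_mono_ae ((ae_restrict_iff' measurableSet_Ioi).2 (ae_of_all _ ?_))
  intro t (ht : 0 < t)
  set r := t ^ (-(1 / σ)) - l with hr
  have e1 : {u : ℝ | t < (u + l) ^ (-σ)} ∩ Ioi 0 = Ioo 0 r := by
    ext u
    simp only [mem_inter_iff, mem_setOf_eq, mem_Ioi, mem_Ioo]
    constructor
    · rintro ⟨h1, h2⟩; exact ⟨h2, (aux_E1 hσ hl ht h2.le).1 h1⟩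
    · rintro ⟨h1, h2⟩; exact ⟨(aux_E1 hσ hl ht h1.le).2 h2, h1⟩
  have e2 : {x : ℝ | t < (φ x + l) ^ (-σ)} ∩ Aset = {x | φ x < r} ∩ Aset := by
    ext x
    simp only [mem_inter_iff, mem_setOf_eq]
    rw [aux_E1 hσ hl ht (hφ0 x)]
  rw [Measure.restrict_apply (measurableSet_lt measurable_const hmu),
    Measure.restrict_apply (measurableSet_lt measurable_const hmφ), e1, e2, Real.volume_Ioo,
    sub_zero]
  rcases le_or_gt r 0 with h | h
  · rw [ENNReal.ofReal_eq_zero.2 h]; exact zero_le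
  · rw [inter_comm]; exact hL r h

lemma aux_amgm {σ A m ℓ : ℝ} (hσ : 1 < σ) (hA : 0 < A) (hm : 0 < m) (hℓ : 0 < ℓ) :
    σ ^ ((σ - 1) / σ) / (σ - 1) * A ^ (1 / σ) * m ^ ((σ - 1) / σ) ≤
      A / (σ * (σ - 1)) * ℓ ^ (1 - σ) + m * ℓ := by
  have hσ0 : 0 < σ := by linarith
  have hσ1 : 0 < σ - 1 := by linarith
  have hL : 0 < ℓ ^ (1 - σ) := Real.rpow_pos_of_pos hℓ _
  set p₁ := A / (σ - 1) * ℓ ^ (1 - σ) with hp₁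
  set p₂ := σ * m / (σ - 1) * ℓ with hp₂
  have hp₁0 : 0 ≤ p₁ := by positivity
  have hp₂0 : 0 ≤ p₂ := by positivity
  have hw : 1 / σ + (σ - 1) / σ = 1 := by field_simp; ring
  have hgm := Real.geom_mean_le_arith_mean2_weighted (by positivity : (0:ℝ) ≤ 1 / σ)
    (by positivity : (0:ℝ) ≤ (σ - 1) / σ) hp₁0 hp₂0 hw
  have hrhs : 1 / σ * p₁ + (σ - 1) / σ * p₂ = A / (σ * (σ - 1)) * ℓ ^ (1 - σ) + m * ℓ := by
    rw [hp₁, hp₂]; field_simp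
  have hden : (σ - 1) ^ ((1:ℝ) / σ) * (σ - 1) ^ ((σ - 1) / σ) = σ - 1 := by
    rw [← Real.rpow_add hσ1, hw, Real.rpow_one]
  have hlexp : ℓ ^ ((1 - σ) / σ) * ℓ ^ ((σ - 1) / σ) = 1 := by
    rw [← Real.rpow_add hℓ, show (1 - σ) / σ + (σ - 1) / σ = 0 by ring, Real.rpow_zero]
  have hlhs : p₁ ^ (1 / σ) * p₂ ^ ((σ - 1) / σ) =
      σ ^ ((σ - 1) / σ) / (σ - 1) * A ^ (1 / σ) * m ^ ((σ - 1) / σ) := by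
    rw [hp₁, hp₂]
    rw [Real.mul_rpow (by positivity) hL.le, Real.mul_rpow (by positivity) hℓ.le,
      Real.div_rpow hA.le hσ1.le, Real.div_rpow (by positivity) hσ1.le,
      Real.mul_rpow hσ0.le hm.le, ← Real.rpow_mul hℓ.le]
    have hd1 : (σ - 1) ^ ((1:ℝ) / σ) ≠ 0 := (Real.rpow_pos_of_pos hσ1 _).ne'
    have hd2 : (σ - 1) ^ ((σ - 1) / σ) ≠ 0 := (Real.rpow_pos_of_pos hσ1 _).ne'
    field_simp
    linear_combination (σ - 1) * hlexp - hden
  calc σ ^ ((σ - 1) / σ) / (σ - 1) * A ^ (1 / σ) * m ^ ((σ - 1) / σ)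
      = p₁ ^ (1 / σ) * p₂ ^ ((σ - 1) / σ) := hlhs.symm
    _ ≤ 1 / σ * p₁ + (σ - 1) / σ * p₂ := hgm
    _ = A / (σ * (σ - 1)) * ℓ ^ (1 - σ) + m * ℓ := hrhs

/- STATEMENT 10: explicit positive lower bound for G₁ on functions connecting α' to β',
with m_δ := min V on [α'+δ, β'−δ] (which is strictly positive). -/
theorem stmt_10 (a s D α' β' : ℝ) (V : ℝ → ℝ)
    (ha : a ∈ Set.Ioo (-1 : ℝ) 0) (hs : s = (1 - a) / 2) (hD : 0 < D) (hαβ : α' < β')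
    (hV0 : ∀ t, 0 ≤ V t) (hVc : Continuous V)
    (hVz : ∀ t, V t = 0 ↔ t = α' ∨ t = β')
    (δ : ℝ) (hδ0 : 0 < δ) (hδ : δ < (β' - α') / 2)
    (mδ : ℝ) (hm : mδ = sInf (V '' Icc (α' + δ) (β' - δ))) :
    0 < mδ ∧
    0 < (2 * s) ^ ((2 * s - 1) / (2 * s)) / (2 * s - 1) *
        ((β' - α' - 2 * δ) ^ 2 / D) ^ (1 / (2 * s)) * mδ ^ ((2 * s - 1) / (2 * s)) ∧
    ∀ v : ℝ → ℝ, Measurable v →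
      Tendsto v atBot (nhds α') → Tendsto v atTop (nhds β') →
      ENNReal.ofReal
          ((2 * s) ^ ((2 * s - 1) / (2 * s)) / (2 * s - 1) *
            ((β' - α' - 2 * δ) ^ 2 / D) ^ (1 / (2 * s)) * mδ ^ ((2 * s - 1) / (2 * s))) ≤
        Gone a s D V v := by
  obtain ⟨ha1, ha2⟩ := ha
  have h2s1 : 1 < 2 * s := by rw [hs]; linarith
  have h2s0 : (0:ℝ) < 2 * s := by linarith
  have hσ1 : (0:ℝ) < 2 * s - 1 := by linarith
  have hM : 0 < β' - α' - 2 * δ := by linarith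
  -- positivity of mδ
  have hIccne : (Icc (α' + δ) (β' - δ)).Nonempty := nonempty_Icc.2 (by linarith)
  obtain ⟨t₀, ht₀, hmin⟩ := isCompact_Icc.exists_isMinOn hIccne hVc.continuousOn
  have ht₀pos : 0 < V t₀ := by
    rcases (hV0 t₀).lt_or_eq with h | h
    · exact h
    · exfalso
      rcases (hVz t₀).1 h.symm with h' | h'
      · have := ht₀.1; rw [h'] at this; linarith
      · have := ht₀.2; rw [h'] at this; linarith
  have hmδpos : 0 < mδ := by
    rw [hm]
    exact lt_of_lt_of_le ht₀pos (le_csInf (hIccne.image V)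
      (by rintro b ⟨t, ht, rfl⟩; exact hmin ht))
  have hVmin : ∀ t, α' + δ ≤ t → t ≤ β' - δ → mδ ≤ V t := by
    intro t h1 h2
    rw [hm]
    exact csInf_le ⟨0, by rintro b ⟨u, _, rfl⟩; exact hV0 u⟩ (mem_image_of_mem V ⟨h1, h2⟩)
  have hcpos : 0 < (2 * s) ^ ((2 * s - 1) / (2 * s)) / (2 * s - 1) *
      ((β' - α' - 2 * δ) ^ 2 / D) ^ (1 / (2 * s)) * mδ ^ ((2 * s - 1) / (2 * s)) :=
    mul_pos (mul_pos (div_pos (Real.rpow_pos_of_pos h2s0 _) hσ1)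
      (Real.rpow_pos_of_pos (div_pos (pow_pos hM 2) hD) _)) (Real.rpow_pos_of_pos hmδpos _)
  refine ⟨hmδpos, hcpos, ?_⟩
  intro v hv hvbot hvtop
  have hGone : Gone a s D V v =
      ENNReal.ofReal (1 / D) * gag s univ v + ∫⁻ x, ENNReal.ofReal (V (v x)) := by
    unfold Gone
    rw [Real.one_rpow, Real.one_rpow, ENNReal.ofReal_one, one_mul]
  set Aset := {x : ℝ | v x ≤ α' + δ} with hAdef
  set Bset := {x : ℝ | β' - δ ≤ v x} with hBdef
  set Cset := {x : ℝ | α' + δ < v x ∧ v x < β' - δ} with hCdef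
  have hAm : MeasurableSet Aset := hv measurableSet_Iic
  have hBm : MeasurableSet Bset := hv measurableSet_Ici
  have hCm : MeasurableSet Cset := hv measurableSet_Ioo
  have hpot : ENNReal.ofReal mδ * volume Cset ≤ ∫⁻ x, ENNReal.ofReal (V (v x)) := by
    calc ENNReal.ofReal mδ * volume Cset
        = ∫⁻ _ in Cset, ENNReal.ofReal mδ := (setLIntegral_const _ _).symm
      _ ≤ ∫⁻ x in Cset, ENNReal.ofReal (V (v x)) :=
          lintegral_mono_ae ((ae_restrict_iff' hCm).2 (ae_of_all _ fun x hx =>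
            ENNReal.ofReal_le_ofReal (hVmin _ hx.1.le hx.2.le)))
      _ ≤ ∫⁻ x, ENNReal.ofReal (V (v x)) := setLIntegral_le_lintegral _ _
  rcases eq_or_ne (volume Cset) ⊤ with hCinf | hCfin
  · have hpt : (∫⁻ x, ENNReal.ofReal (V (v x))) = ⊤ := by
      refine top_unique ?_
      refine le_trans ?_ hpot
      rw [hCinf, ENNReal.mul_top ((ENNReal.ofReal_pos.2 hmδpos).ne')]
    rw [hGone, hpt]
    simp
  set ℓr := (volume Cset).toReal with hℓrdef
  have hCvol : volume Cset = ENNReal.ofReal ℓr := (ENNReal.ofReal_toReal hCfin).symm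
  have hℓr0 : 0 ≤ ℓr := ENNReal.toReal_nonneg
  obtain ⟨R₁, hR₁⟩ := eventually_atBot.1 (hvbot.eventually (gt_mem_nhds
    (show α' < α' + δ by linarith)))
  obtain ⟨R₂, hR₂⟩ := eventually_atTop.1 (hvtop.eventually (lt_mem_nhds
    (show β' - δ < β' by linarith)))
  have hIA : Iic R₁ ⊆ Aset := fun x hx => (hR₁ x hx).le
  have hAIio : Aset ⊆ Iio R₂ := by
    intro x hx
    by_contra h
    have h' : R₂ ≤ x := not_lt.1 (fun hc => h hc)
    have h1 := hR₂ x h'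
    have h2 : v x ≤ α' + δ := hx
    linarith
  set φ : ℝ → ℝ := fun x => (volume (Aset ∩ Ioi x)).toReal with hφdef
  have hAfin : ∀ x, volume (Aset ∩ Ioi x) ≠ ⊤ := by
    intro x
    refine ne_top_of_le_ne_top ?_ (measure_mono (?_ : Aset ∩ Ioi x ⊆ Ioo x R₂))
    · rw [Real.volume_Ioo]; exact ENNReal.ofReal_ne_top
    · rintro y ⟨hy1, hy2⟩; exact ⟨hy2, hAIio hy1⟩
  have hφ0 : ∀ x, 0 ≤ φ x := fun x => ENNReal.toReal_nonneg
  have hφofReal : ∀ x, volume (Aset ∩ Ioi x) = ENNReal.ofReal (φ x) :=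
    fun x => (ENNReal.ofReal_toReal (hAfin x)).symm
  have hφanti : Antitone φ := fun x y hxy => ENNReal.toReal_mono (hAfin x)
    (measure_mono (inter_subset_inter_right _ (Ioi_subset_Ioi hxy)))
  have hφm : Measurable φ := hφanti.measurable
  have hφlip : ∀ x y : ℝ, x ≤ y → φ x ≤ φ y + (y - x) := by
    intro x y hxy
    have hsub : Aset ∩ Ioi x ⊆ (Aset ∩ Ioi y) ∪ Ioc x y := by
      rintro z ⟨hz1, hz2⟩
      by_cases h : z ≤ y
      · exact Or.inr ⟨hz2, h⟩
      · exact Or.inl ⟨hz1, lt_of_not_ge h⟩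
    have h1 := (measure_mono (μ := volume) hsub).trans (measure_union_le _ _)
    rw [hφofReal x, hφofReal y, Real.volume_Ioc,
      ← ENNReal.ofReal_add (hφ0 y) (by linarith)] at h1
    exact (ENNReal.ofReal_le_ofReal_iff (by linarith [hφ0 y])).1 h1
  have hφR : ∀ x, x ≤ R₁ → R₁ - x ≤ φ x := by
    intro x hx
    have hsub : Ioc x R₁ ⊆ Aset ∩ Ioi x := fun z hz => ⟨hIA hz.2, hz.1⟩
    have h2 := measure_mono (μ := volume) hsub
    rw [hφofReal, Real.volume_Ioc] at h2
    exact (ENNReal.ofReal_le_ofReal_iff (hφ0 x)).1 h2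
  have hL : ∀ r : ℝ, 0 < r → ENNReal.ofReal r ≤ volume (Aset ∩ {x | φ x < r}) := by
    intro r hr
    set S := {x : ℝ | φ x < r} with hSdef
    have hφR₂ : φ R₂ = 0 := by
      have he : Aset ∩ Ioi R₂ = ∅ := by
        ext z
        simp only [mem_inter_iff, mem_Ioi, mem_empty_iff_false, iff_false, not_and]
        intro hz
        exact not_lt.2 (le_of_lt (hAIio hz))
      rw [hφdef]
      simp [he]
    have hSne : S.Nonempty := ⟨R₂, by simp only [hSdef, mem_setOf_eq, hφR₂]; exact hr⟩
    have hSbdd : BddBelow S := by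
      refine ⟨R₁ - r, fun z hz => ?_⟩
      by_contra hzr
      push_neg at hzr
      have h1 := hφR z (by linarith)
      have h2 : φ z < r := hz
      linarith
    set t := sInf S with htdef
    have hIoiS : Ioi t ⊆ S := by
      intro y hy
      obtain ⟨z, hzS, hzy⟩ := (csInf_lt_iff hSbdd hSne).1 hy
      exact lt_of_le_of_lt (hφanti hzy.le) hzS
    have hrt : r ≤ φ t := by
      refine le_of_forall_sub_le fun ε hε => ?_
      have hzt : (t - ε) ∉ S := fun h => absurd (csInf_le hSbdd h) (by push_neg; linarith)
      have h1 : r ≤ φ (t - ε) := not_lt.1 hzt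
      have h2 := hφlip (t - ε) t (by linarith)
      linarith
    calc ENNReal.ofReal r ≤ ENNReal.ofReal (φ t) := ENNReal.ofReal_le_ofReal hrt
      _ = volume (Aset ∩ Ioi t) := (hφofReal t).symm
      _ ≤ volume (Aset ∩ S) := measure_mono (inter_subset_inter_right _ hIoiS)
  -- main estimate for a given ℓ'
  have main : ∀ ℓ' : ℝ, 0 < ℓ' → volume Cset ≤ ENNReal.ofReal ℓ' →
      ENNReal.ofReal ((β' - α' - 2 * δ) ^ 2 / (2 * s) * (ℓ' ^ (1 - 2 * s) / (2 * s - 1)) / D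
        + mδ * ℓr) ≤ Gone a s D V v := by
    intro ℓ' hℓ' hCle
    have hq : ∀ x, 0 < φ x + ℓ' := fun x => by linarith [hφ0 x]
    have hNle : ∀ x, volume (Ioi x \ Bset) ≤ ENNReal.ofReal (φ x + ℓ') := by
      intro x
      have hsub : Ioi x \ Bset ⊆ (Aset ∩ Ioi x) ∪ Cset := by
        rintro z ⟨hz1, hz2⟩
        by_cases h : v z ≤ α' + δ
        · exact Or.inl ⟨h, hz1⟩
        · exact Or.inr ⟨lt_of_not_ge h, lt_of_not_ge fun hc => hz2 hc⟩
      calc volume (Ioi x \ Bset) ≤ volume (Aset ∩ Ioi x) + volume Cset :=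
            (measure_mono (μ := volume) hsub).trans (measure_union_le _ _)
        _ ≤ ENNReal.ofReal (φ x) + ENNReal.ofReal ℓ' := add_le_add (hφofReal x).le hCle
        _ = ENNReal.ofReal (φ x + ℓ') := (ENNReal.ofReal_add (hφ0 x) hℓ'.le).symm
    set M := β' - α' - 2 * δ with hMdef
    have hinner : ∀ x ∈ Aset,
        ENNReal.ofReal (M ^ 2 / (2 * s)) * ENNReal.ofReal ((φ x + ℓ') ^ (-(2 * s))) ≤
          ∫⁻ x' in univ, ENNReal.ofReal ((v x' - v x) ^ 2 / |x' - x| ^ (1 + 2 * s)) := by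
      intro x hx
      have hganti : ∀ y z : ℝ, x < y → y ≤ z →
          ENNReal.ofReal (M ^ 2 * (z - x) ^ (-(1 + 2 * s))) ≤
            ENNReal.ofReal (M ^ 2 * (y - x) ^ (-(1 + 2 * s))) := by
        intro y z h1 h2
        refine ENNReal.ofReal_le_ofReal (mul_le_mul_of_nonneg_left ?_ (sq_nonneg M))
        exact Real.rpow_le_rpow_of_nonpos (by linarith) (by linarith) (by linarith)
      have hstep3 := aux_bathtub (g := fun y => ENNReal.ofReal (M ^ 2 * (y - x) ^ (-(1 + 2 * s))))
        hBm (hq x) (hNle x) hganti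
      have hstep4 : (∫⁻ y in Ioi (x + (φ x + ℓ')),
            ENNReal.ofReal (M ^ 2 * (y - x) ^ (-(1 + 2 * s)))) =
          ENNReal.ofReal (M ^ 2) * ENNReal.ofReal ((φ x + ℓ') ^ (-(2 * s)) / (2 * s)) := by
        have hsh := aux_shift x (φ x + ℓ')
          (fun w => ENNReal.ofReal (M ^ 2 * w ^ (-(1 + 2 * s))))
        rw [hsh]
        simp_rw [ENNReal.ofReal_mul (sq_nonneg M)]
        rw [lintegral_const_mul' _ _ ENNReal.ofReal_ne_top,
          aux_int (show -(1 + 2 * s) < -1 by linarith) (hq x),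
          show -(1 + 2 * s) + 1 = -(2 * s) by ring, neg_neg]
      have hstep2 : (∫⁻ y in Bset ∩ Ioi x, ENNReal.ofReal (M ^ 2 * (y - x) ^ (-(1 + 2 * s)))) ≤
          ∫⁻ y in Bset ∩ Ioi x, ENNReal.ofReal ((v y - v x) ^ 2 / |y - x| ^ (1 + 2 * s)) := by
        refine lintegral_mono_ae ((ae_restrict_iff' (hBm.inter measurableSet_Ioi)).2
          (ae_of_all _ fun y hy => ?_))
        have hyx : 0 < y - x := sub_pos.2 hy.2
        have hvy : β' - δ ≤ v y := hy.1
        have hvx : v x ≤ α' + δ := hx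
        have hMle : M ≤ v y - v x := by rw [hMdef]; linarith
        refine ENNReal.ofReal_le_ofReal ?_
        rw [abs_of_pos hyx, Real.rpow_neg hyx.le, ← div_eq_mul_inv]
        gcongr
      calc ENNReal.ofReal (M ^ 2 / (2 * s)) * ENNReal.ofReal ((φ x + ℓ') ^ (-(2 * s)))
          = ENNReal.ofReal (M ^ 2) * ENNReal.ofReal ((φ x + ℓ') ^ (-(2 * s)) / (2 * s)) := by
            rw [← ENNReal.ofReal_mul (by positivity), ← ENNReal.ofReal_mul (sq_nonneg M),
              div_mul_eq_mul_div, mul_div_assoc]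
        _ = ∫⁻ y in Ioi (x + (φ x + ℓ')),
              ENNReal.ofReal (M ^ 2 * (y - x) ^ (-(1 + 2 * s))) := hstep4.symm
        _ ≤ ∫⁻ y in Bset ∩ Ioi x,
              ENNReal.ofReal (M ^ 2 * (y - x) ^ (-(1 + 2 * s))) := hstep3
        _ ≤ ∫⁻ y in Bset ∩ Ioi x,
              ENNReal.ofReal ((v y - v x) ^ 2 / |y - x| ^ (1 + 2 * s)) := hstep2
        _ ≤ ∫⁻ x' in univ, ENNReal.ofReal ((v x' - v x) ^ 2 / |x' - x| ^ (1 + 2 * s)) :=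
            lintegral_mono_set (subset_univ _)
    have h1 : (∫⁻ u in Ioi (0 : ℝ), ENNReal.ofReal ((u + ℓ') ^ (-(2 * s)))) =
        ENNReal.ofReal (ℓ' ^ (1 - 2 * s) / (2 * s - 1)) := by
      have hsh := aux_shift ℓ' 0 (fun w => ENNReal.ofReal ((w + ℓ') ^ (-(2 * s))))
      rw [add_zero] at hsh
      simp only [sub_add_cancel] at hsh
      rw [← hsh, aux_int (show -(2 * s) < -1 by linarith) hℓ',
        show -(2 * s) + 1 = 1 - 2 * s by ring, show -(1 - 2 * s) = 2 * s - 1 by ring]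
    have hgag : ENNReal.ofReal (M ^ 2 / (2 * s)) * ENNReal.ofReal (ℓ' ^ (1 - 2 * s) / (2 * s - 1))
        ≤ gag s univ v := by
      have h2 := aux_layer hAm hφm hφ0 hL h2s0 hℓ'
      calc ENNReal.ofReal (M ^ 2 / (2 * s)) * ENNReal.ofReal (ℓ' ^ (1 - 2 * s) / (2 * s - 1))
          = ENNReal.ofReal (M ^ 2 / (2 * s)) *
              ∫⁻ u in Ioi (0 : ℝ), ENNReal.ofReal ((u + ℓ') ^ (-(2 * s))) := by rw [h1]
        _ ≤ ENNReal.ofReal (M ^ 2 / (2 * s)) *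
              ∫⁻ x in Aset, ENNReal.ofReal ((φ x + ℓ') ^ (-(2 * s))) := mul_le_mul_right h2 _
        _ = ∫⁻ x in Aset, ENNReal.ofReal (M ^ 2 / (2 * s)) *
              ENNReal.ofReal ((φ x + ℓ') ^ (-(2 * s))) :=
            (lintegral_const_mul' _ _ ENNReal.ofReal_ne_top).symm
        _ ≤ ∫⁻ x in Aset, ∫⁻ x' in univ,
              ENNReal.ofReal ((v x' - v x) ^ 2 / |x' - x| ^ (1 + 2 * s)) :=
            lintegral_mono_ae ((ae_restrict_iff' hAm).2 (ae_of_all _ hinner))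
        _ ≤ ∫⁻ x in univ, ∫⁻ x' in univ,
              ENNReal.ofReal ((v x' - v x) ^ 2 / |x' - x| ^ (1 + 2 * s)) :=
            lintegral_mono_set (subset_univ _)
        _ = gag s univ v := by unfold gag; rfl
    rw [hGone]
    calc ENNReal.ofReal (M ^ 2 / (2 * s) * (ℓ' ^ (1 - 2 * s) / (2 * s - 1)) / D + mδ * ℓr)
        ≤ ENNReal.ofReal (M ^ 2 / (2 * s) * (ℓ' ^ (1 - 2 * s) / (2 * s - 1)) / D) +
            ENNReal.ofReal (mδ * ℓr) := ENNReal.ofReal_add_le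
      _ ≤ ENNReal.ofReal (1 / D) * gag s univ v + ∫⁻ x, ENNReal.ofReal (V (v x)) := by
          refine add_le_add ?_ ?_
          · rw [show M ^ 2 / (2 * s) * (ℓ' ^ (1 - 2 * s) / (2 * s - 1)) / D =
                (1 / D) * (M ^ 2 / (2 * s) * (ℓ' ^ (1 - 2 * s) / (2 * s - 1))) by ring,
              ENNReal.ofReal_mul (by positivity), ENNReal.ofReal_mul (by positivity)]
            exact mul_le_mul_right hgag _
          · rw [ENNReal.ofReal_mul hmδpos.le, ← hCvol]
            exact hpot
  rcases hℓr0.eq_or_lt with hzero | hpos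
  · -- ℓr = 0 case
    have hKpos : 0 < (β' - α' - 2 * δ) ^ 2 / (2 * s * (2 * s - 1) * D) := by positivity
    set c0 := (2 * s) ^ ((2 * s - 1) / (2 * s)) / (2 * s - 1) *
      ((β' - α' - 2 * δ) ^ 2 / D) ^ (1 / (2 * s)) * mδ ^ ((2 * s - 1) / (2 * s)) with hc0
    set K0 := (β' - α' - 2 * δ) ^ 2 / (2 * s * (2 * s - 1) * D) with hK0
    set ℓ0 := (K0 / c0) ^ (1 / (2 * s - 1)) with hℓ0
    have hℓ0pos : 0 < ℓ0 := Real.rpow_pos_of_pos (div_pos hKpos hcpos) _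
    have hpow : K0 * ℓ0 ^ (1 - 2 * s) = c0 := by
      rw [hℓ0, ← Real.rpow_mul (div_pos hKpos hcpos).le,
        show 1 / (2 * s - 1) * (1 - 2 * s) = -1 by
          rw [div_mul_eq_mul_div, div_eq_iff hσ1.ne']; ring,
        Real.rpow_neg_one]
      field_simp
    refine le_trans (ENNReal.ofReal_le_ofReal ?_) (main ℓ0 hℓ0pos ?_)
    · rw [← hzero, mul_zero, add_zero]
      rw [show (β' - α' - 2 * δ) ^ 2 / (2 * s) * (ℓ0 ^ (1 - 2 * s) / (2 * s - 1)) / D =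
          K0 * ℓ0 ^ (1 - 2 * s) by rw [hK0]; field_simp <;> ring, hpow]
    · rw [hCvol, ← hzero]
      simp
  · -- ℓr > 0 case
    refine le_trans (ENNReal.ofReal_le_ofReal ?_) (main ℓr hpos hCvol.le)
    have hamgm := aux_amgm (σ := 2 * s) (A := (β' - α' - 2 * δ) ^ 2 / D) (m := mδ) (ℓ := ℓr)
      h2s1 (div_pos (pow_pos hM 2) hD) hmδpos hpos
    have heq : (β' - α' - 2 * δ) ^ 2 / D / (2 * s * (2 * s - 1)) * ℓr ^ (1 - 2 * s) =
        (β' - α' - 2 * δ) ^ 2 / (2 * s) * (ℓr ^ (1 - 2 * s) / (2 * s - 1)) / D := by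
      field_simp
    rw [heq] at hamgm
    exact hamgm
end
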